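/- Let D ⊂ ℝ² be a bounded measurable set whose boundary is a rectifiable curve of finite length L > 0, let δ = diam(D) be its diameter, and let 𝟏_D be its characteristic function. Then for every s ∈ (0, 1/2], the Besov–Nikolskii seminorm satisfies sup_{x ∈ ℝ², x ≠ 0} ‖𝟏_D(·+x) − 𝟏_D‖_{L²(ℝ²)} / |x|^s ≤ (L · δ^{1−2s})^{1/2}. -/

import Mathlib

set_option maxHeartbeats 1000000

open MeasureTheory Set
open scoped RealInnerProductSpace

local notation "E2" => EuclideanSpace ℝ (Fin 2)


lemma vol_box (b : OrthonormalBasis (Fin 2) ℝ (EuclideanSpace ℝ (Fin 2))) (a₁ b₁ a₂ b₂ : ℝ) :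
    volume {y : E2 | ⟪b 0, y⟫ ∈ Icc a₁ b₁ ∧ ⟪b 1, y⟫ ∈ Icc a₂ b₂}
      = ENNReal.ofReal (b₁ - a₁) * ENNReal.ofReal (b₂ - a₂) := by
  have hset : {y : E2 | ⟪b 0, y⟫ ∈ Icc a₁ b₁ ∧ ⟪b 1, y⟫ ∈ Icc a₂ b₂}
      = b.repr ⁻¹' {v : E2 | v 0 ∈ Icc a₁ b₁ ∧ v 1 ∈ Icc a₂ b₂} := by
    ext y
    simp only [mem_setOf_eq, mem_preimage, OrthonormalBasis.repr_apply_apply,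
      real_inner_comm]
  rw [hset]
  have h1 := b.measurePreserving_repr
  rw [h1.measure_preimage]
  · have hset2 : {v : E2 | v 0 ∈ Icc a₁ b₁ ∧ v 1 ∈ Icc a₂ b₂}
        = (MeasurableEquiv.toLp 2 (Fin 2 → ℝ)).symm ⁻¹'
          (Set.univ.pi fun i => if i = 0 then Icc a₁ b₁ else Icc a₂ b₂) := by
      ext v
      simp only [mem_setOf_eq, mem_preimage, mem_pi, mem_univ, forall_true_left]
      constructor
      · rintro ⟨h0, h1'⟩ i; fin_cases i
        · exact h0
        · exact h1'
      · intro h; exact ⟨by simpa using h 0, by simpa using h 1⟩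
    rw [hset2, (EuclideanSpace.volume_preserving_symm_measurableEquiv_toLp (Fin 2)).measure_preimage]
    · rw [volume_pi_pi]
      rw [Fin.prod_univ_two]
      simp [Real.volume_Icc]
    · exact (MeasurableSet.univ_pi fun i => by
        split <;> exact measurableSet_Icc).nullMeasurableSet
  · exact ((measurableSet_Icc.preimage (by fun_prop)).inter
      (measurableSet_Icc.preimage (by fun_prop))).nullMeasurableSet

lemma exists_onb (e : E2) (he : ‖e‖ = 1) :
    ∃ b : OrthonormalBasis (Fin 2) ℝ (EuclideanSpace ℝ (Fin 2)), b 0 = e ∧ ⟪b 1, e⟫ = 0 := by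
  classical
  set e' : E2 := (WithLp.equiv 2 (Fin 2 → ℝ)).symm ![-(e 1), e 0] with he'
  have he'app0 : e' 0 = -(e 1) := rfl
  have he'app1 : e' 1 = e 0 := rfl
  have hsq : e 0 * e 0 + e 1 * e 1 = 1 := by
    have h1 : ⟪e, e⟫ = 1 := by
      rw [real_inner_self_eq_norm_sq, he]; norm_num
    rw [PiLp.inner_apply, Fin.sum_univ_two] at h1
    simpa [RCLike.inner_apply, conj_trivial, sq] using h1
  have hinner : ∀ (a c : E2), ⟪a, c⟫ = a 0 * c 0 + a 1 * c 1 := by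
    intro a c
    rw [PiLp.inner_apply, Fin.sum_univ_two]
    rw [Real.inner_apply, Real.inner_apply]
  have hon : Orthonormal ℝ ![e, e'] := by
    rw [orthonormal_iff_ite]
    intro i j
    fin_cases i <;> fin_cases j <;>
      rw [hinner] <;> simp [he'app0, he'app1] <;> nlinarith [hsq]
  have hcard : Fintype.card (Fin 2) = Module.finrank ℝ (EuclideanSpace ℝ (Fin 2)) := by
    simp [finrank_euclideanSpace_fin]
  let bb := basisOfOrthonormalOfCardEqFinrank hon hcard
  have hbb : ⇑bb = ![e, e'] := coe_basisOfOrthonormalOfCardEqFinrank hon hcard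
  refine ⟨bb.toOrthonormalBasis (by rwa [hbb]), ?_, ?_⟩
  · rw [Module.Basis.coe_toOrthonormalBasis, hbb]; rfl
  · rw [Module.Basis.coe_toOrthonormalBasis, hbb]
    show ⟪e', e⟫ = 0
    rw [hinner, he'app0, he'app1]; ring

lemma exists_part (n : ℕ) (hn : 0 < n) {w : ℝ} (hw : w ∈ Icc (0:ℝ) 1) :
    ∃ i : Fin n, w ∈ Icc ((i:ℝ)/n) (((i:ℝ)+1)/n) := by
  have hn' : (0:ℝ) < n := by exact_mod_cast hn
  rcases eq_or_lt_of_le hw.2 with h1 | h1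
  · refine ⟨⟨n-1, Nat.sub_lt hn one_pos⟩, ?_, ?_⟩
    · subst h1
      rw [div_le_one hn']
      have : ((n-1 : ℕ) : ℝ) ≤ n := by exact_mod_cast Nat.sub_le n 1
      simpa using this
    · subst h1
      rw [le_div_iff₀ hn']
      have hcast : ((n-1:ℕ):ℝ) = (n:ℝ) - 1 := by
        have := Nat.cast_sub (R := ℝ) hn
        simpa using this
      simp only [hcast]
      nlinarith
  · set j := ⌊w * n⌋₊ with hj
    have hwn : 0 ≤ w * n := mul_nonneg hw.1 hn'.le
    have hjle : (j:ℝ) ≤ w * n := Nat.floor_le hwn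
    have hjlt : w * n < (j:ℝ) + 1 := Nat.lt_floor_add_one _
    have hjn : j < n := by
      have : w * n < n := by nlinarith
      have : (j:ℝ) < n := lt_of_le_of_lt hjle this
      exact_mod_cast this
    refine ⟨⟨j, hjn⟩, ?_, ?_⟩
    · rw [div_le_iff₀ hn']; exact hjle
    · rw [le_div_iff₀ hn']; exact hjlt.le

lemma core (γ : ℝ → E2) (hγcont : ContinuousOn γ (Icc 0 1)) (L : ℝ) (hL : 0 ≤ L)
    (hγlen : eVariationOn γ (Icc 0 1) ≤ ENNReal.ofReal L) (x : E2) (hx : x ≠ 0) :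
    volume {y : E2 | ∃ u ∈ Icc (0:ℝ) 1, ∃ t ∈ Icc (0:ℝ) 1, y = γ u - t • x}
      ≤ ENNReal.ofReal (L * ‖x‖) := by
  classical
  set e : E2 := ‖x‖⁻¹ • x with hedef
  have hxnorm : (0:ℝ) < ‖x‖ := norm_pos_iff.2 hx
  have he : ‖e‖ = 1 := norm_smul_inv_norm hx
  obtain ⟨b, hb0, hb1e⟩ := exists_onb e he
  have hb0n : ‖b 0‖ = 1 := b.orthonormal.1 0
  have hb1n : ‖b 1‖ = 1 := b.orthonormal.1 1
  have hxe : ⟪b 0, x⟫ = ‖x‖ := by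
    rw [hb0, hedef, real_inner_smul_left, real_inner_self_eq_norm_sq]
    rw [sq]
    field_simp
  have hxe' : ⟪b 1, x⟫ = 0 := by
    have hxeq : x = ‖x‖ • e := by
      rw [hedef, smul_smul, mul_inv_cancel₀ hxnorm.ne', one_smul]
    rw [hxeq, real_inner_smul_right, hb1e, mul_zero]
  set f : ℝ → ℝ := fun u => ⟪b 0, γ u⟫ with hfdef
  set g : ℝ → ℝ := fun u => ⟪b 1, γ u⟫ with hgdef
  -- It suffices to prove the bound with an epsilon margin
  have main : ∀ ε : ℝ, 0 < ε →
      volume {y : E2 | ∃ u ∈ Icc (0:ℝ) 1, ∃ t ∈ Icc (0:ℝ) 1, y = γ u - t • x}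
        ≤ ENNReal.ofReal ((‖x‖ + ε) * L) := by
    intro ε hε
    -- uniform continuity
    have huc := isCompact_Icc.uniformContinuousOn_of_continuous hγcont
    rw [Metric.uniformContinuousOn_iff] at huc
    obtain ⟨δ, hδ0, hδ⟩ := huc ε hε
    obtain ⟨n', hn'⟩ := exists_nat_one_div_lt hδ0
    set n : ℕ := n' + 1 with hndef
    have hn0 : 0 < n := Nat.succ_pos _
    have hn0' : (0:ℝ) < n := by exact_mod_cast hn0
    have hδn : 1 / (n:ℝ) < δ := by exact_mod_cast hn'
    -- subintervals
    set I : Fin n → Set ℝ := fun i => Icc ((i:ℝ)/n) (((i:ℝ)+1)/n) with hIdef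
    have hIsub : ∀ i, I i ⊆ Icc (0:ℝ) 1 := by
      intro i
      apply Icc_subset_Icc
      · positivity
      · rw [div_le_one hn0']
        have : (i:ℝ) + 1 ≤ n := by
          have := i.2
          exact_mod_cast Nat.succ_le_of_lt this
        exact this
    have hIne : ∀ i : Fin n, ((i:ℝ)/n) ≤ (((i:ℝ)+1)/n) := fun i => by
      gcongr
      linarith
    have hInon : ∀ i : Fin n, (I i).Nonempty := fun i => Set.nonempty_Icc.2 (hIne i)
    have hIcomp : ∀ i : Fin n, IsCompact (I i) := fun i => isCompact_Icc
    have hfc : ContinuousOn f (Icc 0 1) := by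
      apply ContinuousOn.inner continuousOn_const hγcont
    have hgc : ContinuousOn g (Icc 0 1) := by
      apply ContinuousOn.inner continuousOn_const hγcont
    -- min/max points
    have hmins : ∀ i : Fin n, ∃ p ∈ I i, ∃ q ∈ I i, ∃ a ∈ I i, ∃ c ∈ I i,
        IsMinOn f (I i) p ∧ IsMaxOn f (I i) q ∧ IsMinOn g (I i) a ∧ IsMaxOn g (I i) c := by
      intro i
      obtain ⟨p, hp, hpm⟩ := (hIcomp i).exists_isMinOn (hInon i) (hfc.mono (hIsub i))
      obtain ⟨q, hq, hqm⟩ := (hIcomp i).exists_isMaxOn (hInon i) (hfc.mono (hIsub i))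
      obtain ⟨a, ha, ham⟩ := (hIcomp i).exists_isMinOn (hInon i) (hgc.mono (hIsub i))
      obtain ⟨c, hc, hcm⟩ := (hIcomp i).exists_isMaxOn (hInon i) (hgc.mono (hIsub i))
      exact ⟨p, hp, q, hq, a, ha, c, hc, hpm, hqm, ham, hcm⟩
    choose p hp q hq a ha c hc hpm hqm ham hcm using hmins
    -- rectangles
    set R : Fin n → Set E2 := fun i =>
      {y : E2 | ⟪b 0, y⟫ ∈ Icc (f (p i) - ‖x‖) (f (q i)) ∧ ⟪b 1, y⟫ ∈ Icc (g (a i)) (g (c i))}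
      with hRdef
    have hcover : {y : E2 | ∃ u ∈ Icc (0:ℝ) 1, ∃ t ∈ Icc (0:ℝ) 1, y = γ u - t • x}
        ⊆ ⋃ i, R i := by
      rintro y ⟨w, hw, t, ht, rfl⟩
      obtain ⟨i, hwI⟩ := exists_part n hn0 hw
      refine mem_iUnion.2 ⟨i, ?_, ?_⟩
      · have h1 : ⟪b 0, γ w - t • x⟫ = f w - t * ‖x‖ := by
          rw [inner_sub_right, real_inner_smul_right, hxe]
        rw [h1]
        have hfw1 : f (p i) ≤ f w := hpm i hwI
        have hfw2 : f w ≤ f (q i) := hqm i hwI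
        have ht1 : 0 ≤ t * ‖x‖ := mul_nonneg ht.1 hxnorm.le
        have ht2 : t * ‖x‖ ≤ ‖x‖ := by
          nlinarith [ht.2]
        constructor <;> nlinarith
      · have h1 : ⟪b 1, γ w - t • x⟫ = g w := by
          rw [inner_sub_right, real_inner_smul_right, hxe', mul_zero, sub_zero]
        rw [h1]
        exact ⟨ham i hwI, hcm i hwI⟩
    -- measure bound via rectangles
    have hvol : ∀ i, volume (R i)
        ≤ ENNReal.ofReal (‖x‖ + ε) * ENNReal.ofReal (g (c i) - g (a i)) := by
      intro i
      rw [hRdef]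
      rw [vol_box b]
      gcongr
      -- f (q i) - (f (p i) - ‖x‖) ≤ ‖x‖ + ε
      have hdist : dist (q i) (p i) < δ := by
        have h1 : dist (q i) (p i) ≤ ((i:ℝ)+1)/n - (i:ℝ)/n :=
          Real.dist_le_of_mem_Icc (hq i) (hp i)
        have h2 : ((i:ℝ)+1)/n - (i:ℝ)/n = 1/n := by field_simp; ring
        rw [h2] at h1
        exact lt_of_le_of_lt h1 hδn
      have h3 : dist (γ (q i)) (γ (p i)) < ε :=
        hδ (q i) (hIsub i (hq i)) (p i) (hIsub i (hp i)) hdist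
      have h4 : |f (q i) - f (p i)| ≤ dist (γ (q i)) (γ (p i)) := by
        rw [hfdef]
        simp only []
        rw [← inner_sub_right, dist_eq_norm]
        calc |⟪b 0, γ (q i) - γ (p i)⟫| ≤ ‖b 0‖ * ‖γ (q i) - γ (p i)‖ :=
              abs_real_inner_le_norm _ _
          _ = ‖γ (q i) - γ (p i)‖ := by rw [hb0n, one_mul]
      have := abs_le.1 h4
      linarith [this.2]
    have hKsum : volume {y : E2 | ∃ u ∈ Icc (0:ℝ) 1, ∃ t ∈ Icc (0:ℝ) 1, y = γ u - t • x}
        ≤ ∑ i : Fin n, volume (R i) := by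
      refine le_trans (measure_mono hcover) ?_
      exact measure_iUnion_fintype_le _ _
    -- sum of g-oscillations is at most L
    have hsumg : (∑ i : Fin n, ENNReal.ofReal (g (c i) - g (a i))) ≤ ENNReal.ofReal L := by
      set m : ℕ → ℝ := fun k => if h : k < n then min (a ⟨k,h⟩) (c ⟨k,h⟩) else 1 with hmdef
      set M : ℕ → ℝ := fun k => if h : k < n then max (a ⟨k,h⟩) (c ⟨k,h⟩) else 1 with hMdef
      have hmk : ∀ i : Fin n, m (i:ℕ) = min (a i) (c i) := by
        intro i; rw [hmdef]; simp only [i.2, dif_pos, Fin.eta]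
      have hMk : ∀ i : Fin n, M (i:ℕ) = max (a i) (c i) := by
        intro i; rw [hMdef]; simp only [i.2, dif_pos, Fin.eta]
      have haI : ∀ i : Fin n, a i ∈ Icc (0:ℝ) 1 := fun i => hIsub i (ha i)
      have hcI : ∀ i : Fin n, c i ∈ Icc (0:ℝ) 1 := fun i => hIsub i (hc i)
      have hm01 : ∀ k, m k ∈ Icc (0:ℝ) 1 := by
        intro k; rw [hmdef]
        by_cases h : k < n
        · simp only [h, dif_pos]
          rcases min_cases (a ⟨k,h⟩) (c ⟨k,h⟩) with ⟨heq,_⟩ | ⟨heq,_⟩ <;> rw [heq]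
          · exact haI _
          · exact hcI _
        · simp only [h, dif_neg]; norm_num
      have hM01 : ∀ k, M k ∈ Icc (0:ℝ) 1 := by
        intro k; rw [hMdef]
        by_cases h : k < n
        · simp only [h, dif_pos]
          rcases max_cases (a ⟨k,h⟩) (c ⟨k,h⟩) with ⟨heq,_⟩ | ⟨heq,_⟩ <;> rw [heq]
          · exact haI _
          · exact hcI _
        · simp only [h, dif_neg]; norm_num
      have hmM : ∀ k, m k ≤ M k := by
        intro k; rw [hmdef, hMdef]
        by_cases h : k < n
        · simp only [h, dif_pos]; exact min_le_max
        · simp only [h, dif_neg]; exact le_refl 1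
      have hMm : ∀ k, k + 1 < n → M k ≤ m (k+1) := by
        intro k hk1
        have hk : k < n := by omega
        rw [hmdef, hMdef]
        simp only [hk, hk1, dif_pos]
        have h1 : max (a ⟨k,hk⟩) (c ⟨k,hk⟩) ≤ (((⟨k,hk⟩ : Fin n):ℝ)+1)/n :=
          max_le (ha _).2 (hc _).2
        have h2 : (((⟨k+1,hk1⟩ : Fin n):ℝ))/n ≤ min (a ⟨k+1,hk1⟩) (c ⟨k+1,hk1⟩) :=
          le_min (ha _).1 (hc _).1
        refine le_trans h1 (le_trans ?_ h2)
        gcongr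
        push_cast
        linarith
      set cseq : ℕ → ℝ := fun j =>
        if j < 2*n then (if j % 2 = 0 then m (j/2) else M (j/2)) else 1 with hcseqdef
      have hcseq_even : ∀ j, j < 2*n → j % 2 = 0 → cseq j = m (j/2) := by
        intro j h1 h2; rw [hcseqdef]; simp only [h1, if_pos, h2]
      have hcseq_odd : ∀ j, j < 2*n → j % 2 = 1 → cseq j = M (j/2) := by
        intro j h1 h2; rw [hcseqdef]; simp only [h1, if_pos, h2]; norm_num
      have hcseq_big : ∀ j, ¬ (j < 2*n) → cseq j = 1 := by
        intro j h1; rw [hcseqdef]; simp only [h1, if_neg, if_false]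
      have hmemc : ∀ j, cseq j ∈ Icc (0:ℝ) 1 := by
        intro j
        by_cases h1 : j < 2*n
        · rcases Nat.even_or_odd j with he | ho
          · rw [hcseq_even j h1 (Nat.even_iff.1 he)]; exact hm01 _
          · rw [hcseq_odd j h1 (Nat.odd_iff.1 ho)]; exact hM01 _
        · rw [hcseq_big j h1]; exact ⟨zero_le_one, le_refl 1⟩
      have hmono : Monotone cseq := by
        apply monotone_nat_of_le_succ
        intro j
        by_cases h1 : j < 2*n
        · rcases Nat.even_or_odd j with he | ho
          · have hj2 : j % 2 = 0 := Nat.even_iff.1 he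
            have h2 : j + 1 < 2*n := by omega
            have h3 : (j+1) % 2 = 1 := by omega
            have h4 : (j+1)/2 = j/2 := by omega
            rw [hcseq_even j h1 hj2, hcseq_odd (j+1) h2 h3, h4]
            exact hmM _
          · have hj2 : j % 2 = 1 := Nat.odd_iff.1 ho
            by_cases h2 : j + 1 < 2*n
            · have h3 : (j+1) % 2 = 0 := by omega
              have h4 : (j+1)/2 = j/2 + 1 := by omega
              have h5 : j/2 + 1 < n := by omega
              rw [hcseq_odd j h1 hj2, hcseq_even (j+1) h2 h3, h4]
              exact hMm _ h5
            · rw [hcseq_odd j h1 hj2, hcseq_big (j+1) h2]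
              exact (hM01 _).2
        · have h2 : ¬ (j + 1 < 2*n) := by omega
          rw [hcseq_big j h1, hcseq_big (j+1) h2]
      have hvar := eVariationOn.sum_le (f := γ) (n := 2*n) hmono hmemc
      set d : ℕ → ENNReal := fun j => edist (γ (cseq (j+1))) (γ (cseq j)) with hddef
      have hterm : ∀ i : Fin n, ENNReal.ofReal (g (c i) - g (a i)) ≤ d (2*(i:ℕ)) := by
        intro i
        have h1 : 2*(i:ℕ) < 2*n := by have := i.2; omega
        have h2 : 2*(i:ℕ)+1 < 2*n := by have := i.2; omega
        have hs1 : cseq (2*(i:ℕ)) = min (a i) (c i) := by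
          rw [hcseq_even _ h1 (by omega), (by omega : 2*(i:ℕ)/2 = (i:ℕ)), hmk]
        have hs2 : cseq (2*(i:ℕ)+1) = max (a i) (c i) := by
          rw [hcseq_odd _ h2 (by omega), (by omega : (2*(i:ℕ)+1)/2 = (i:ℕ)), hMk]
        rw [hddef]
        simp only []
        rw [hs1, hs2]
        have habs : g (c i) - g (a i) ≤ |g (max (a i) (c i)) - g (min (a i) (c i))| := by
          rcases le_total (a i) (c i) with h | h
          · rw [max_eq_right h, min_eq_left h]
            exact le_abs_self _
          · rw [max_eq_left h, min_eq_right h, abs_sub_comm]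
            exact le_abs_self _
        have hnorm : |g (max (a i) (c i)) - g (min (a i) (c i))|
            ≤ dist (γ (max (a i) (c i))) (γ (min (a i) (c i))) := by
          rw [hgdef]
          simp only []
          rw [← inner_sub_right, dist_eq_norm]
          calc |⟪b 1, γ (max (a i) (c i)) - γ (min (a i) (c i))⟫|
              ≤ ‖b 1‖ * ‖γ (max (a i) (c i)) - γ (min (a i) (c i))‖ :=
                abs_real_inner_le_norm _ _
            _ = _ := by rw [hb1n, one_mul]
        rw [edist_dist]
        exact ENNReal.ofReal_le_ofReal (le_trans habs hnorm)
      calc (∑ i : Fin n, ENNReal.ofReal (g (c i) - g (a i)))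
          ≤ ∑ i : Fin n, d (2*(i:ℕ)) := Finset.sum_le_sum fun i _ => hterm i
        _ = ∑ i ∈ Finset.range n, d (2*i) := Fin.sum_univ_eq_sum_range (fun k => d (2*k)) n
        _ = ∑ j ∈ (Finset.range n).image (fun i => 2*i), d j := by
            rw [Finset.sum_image]
            intro i _ j _ h
            simp only at h
            omega
        _ ≤ ∑ j ∈ Finset.range (2*n), d j := by
            apply Finset.sum_le_sum_of_subset
            intro j hj
            simp only [Finset.mem_image, Finset.mem_range] at hj ⊢
            obtain ⟨i, hi, rfl⟩ := hj
            omega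
        _ ≤ eVariationOn γ (Icc 0 1) := hvar
        _ ≤ ENNReal.ofReal L := hγlen
    calc volume {y : E2 | ∃ u ∈ Icc (0:ℝ) 1, ∃ t ∈ Icc (0:ℝ) 1, y = γ u - t • x}
        ≤ ∑ i : Fin n, volume (R i) := hKsum
      _ ≤ ∑ i : Fin n, ENNReal.ofReal (‖x‖ + ε) * ENNReal.ofReal (g (c i) - g (a i)) :=
          Finset.sum_le_sum fun i _ => hvol i
      _ = ENNReal.ofReal (‖x‖ + ε) * ∑ i : Fin n, ENNReal.ofReal (g (c i) - g (a i)) := by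
          rw [Finset.mul_sum]
      _ ≤ ENNReal.ofReal (‖x‖ + ε) * ENNReal.ofReal L := by gcongr
      _ = ENNReal.ofReal ((‖x‖ + ε) * L) := by
          rw [ENNReal.ofReal_mul (by positivity)]
  -- pass to the limit ε → 0
  apply ENNReal.le_of_forall_pos_le_add
  intro η hη _
  rcases eq_or_lt_of_le hL with hL0 | hL0
  · have := main 1 one_pos
    rw [← hL0] at this ⊢
    have h0 : volume {y : E2 | ∃ u ∈ Icc (0:ℝ) 1, ∃ t ∈ Icc (0:ℝ) 1, y = γ u - t • x} ≤ 0 := by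
      simpa using this
    exact le_trans h0 zero_le
  · have hmain := main ((η:ℝ)/L) (div_pos hη hL0)
    refine le_trans hmain ?_
    have heq : (‖x‖ + (η:ℝ)/L) * L = L * ‖x‖ + η := by
      field_simp
    rw [heq, ENNReal.ofReal_add (by positivity) (by positivity)]
    gcongr
    simp

lemma elp (D : Set (EuclideanSpace ℝ (Fin 2))) (hD : MeasurableSet D) (x : E2) :
    eLpNorm (fun y => D.indicator (fun _ => (1 : ℝ)) (y + x)
        - D.indicator (fun _ => (1 : ℝ)) y) 2 volume
      = (volume ((D \ ((· + x) ⁻¹' D)) ∪ (((· + x) ⁻¹' D) \ D))) ^ ((1:ℝ)/2) := by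
  have hD' : MeasurableSet ((· + x) ⁻¹' D) := hD.preimage (measurable_add_const x)
  have hS : MeasurableSet ((D \ ((· + x) ⁻¹' D)) ∪ (((· + x) ⁻¹' D) \ D)) :=
    (hD.diff hD').union (hD'.diff hD)
  rw [eLpNorm_eq_lintegral_rpow_enorm_toReal (by norm_num) (by norm_num)]
  have htr : ENNReal.toReal 2 = 2 := by norm_num
  rw [htr]
  congr 1
  have hpt : ∀ y : E2, (‖D.indicator (fun _ => (1 : ℝ)) (y + x)
      - D.indicator (fun _ => (1 : ℝ)) y‖ₑ : ENNReal) ^ (2:ℝ)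
      = ((D \ ((· + x) ⁻¹' D)) ∪ (((· + x) ⁻¹' D) \ D)).indicator
          (fun _ => (1:ENNReal)) y := by
    intro y
    by_cases h1 : y ∈ D <;> by_cases h2 : y + x ∈ D <;>
      simp -failIfUnchanged only [indicator_of_mem, indicator_of_notMem, h1, h2, if_pos, if_neg,
        Set.indicator_apply, mem_union, mem_diff, mem_preimage] <;>
      norm_num [h1, h2] <;>
      simp [ENNReal.rpow_two]
  rw [lintegral_congr hpt, lintegral_indicator hS]
  simp

lemma incl (D : Set (EuclideanSpace ℝ (Fin 2))) (γ : ℝ → E2)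
    (hγsurj : frontier D ⊆ γ '' (Icc 0 1)) (x : E2) :
    ((D \ ((· + x) ⁻¹' D)) ∪ (((· + x) ⁻¹' D) \ D))
      ⊆ {y : E2 | ∃ u ∈ Icc (0:ℝ) 1, ∃ t ∈ Icc (0:ℝ) 1, y = γ u - t • x} := by
  intro y hy
  have hFc : Continuous (fun t : ℝ => y + t • x) := by continuity
  have hcov : Icc (0:ℝ) 1 ⊆ ((fun t : ℝ => y + t • x) ⁻¹' closure D)
      ∪ ((fun t : ℝ => y + t • x) ⁻¹' closure Dᶜ) := by
    intro t _
    by_cases h : y + t • x ∈ D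
    · exact Or.inl (subset_closure h)
    · exact Or.inr (subset_closure h)
  have hfr : ∃ t ∈ Icc (0:ℝ) 1, y + t • x ∈ frontier D := by
    have hne1 : (Icc (0:ℝ) 1 ∩ ((fun t : ℝ => y + t • x) ⁻¹' closure D)).Nonempty ∧
        (Icc (0:ℝ) 1 ∩ ((fun t : ℝ => y + t • x) ⁻¹' closure Dᶜ)).Nonempty := by
      rcases hy with ⟨h1, h2⟩ | ⟨h2, h1⟩
      · rw [mem_preimage] at h2
        constructor
        · exact ⟨0, ⟨le_refl 0, zero_le_one⟩, by
            simp only [mem_preimage, zero_smul, add_zero]; exact subset_closure h1⟩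
        · exact ⟨1, ⟨zero_le_one, le_refl 1⟩, by
            simp only [mem_preimage, one_smul]; exact subset_closure h2⟩
      · rw [mem_preimage] at h2
        constructor
        · exact ⟨1, ⟨zero_le_one, le_refl 1⟩, by
            simp only [mem_preimage, one_smul]; exact subset_closure h2⟩
        · exact ⟨0, ⟨le_refl 0, zero_le_one⟩, by
            simp only [mem_preimage, zero_smul, add_zero]; exact subset_closure h1⟩
    obtain ⟨t, htI, ht1, ht2⟩ := isPreconnected_closed_iff.1 isPreconnected_Icc
      _ _ (isClosed_closure.preimage hFc) (isClosed_closure.preimage hFc)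
      hcov hne1.1 hne1.2
    exact ⟨t, htI, by
      rw [frontier_eq_closure_inter_closure]
      exact ⟨ht1, ht2⟩⟩
  obtain ⟨t, htI, htfr⟩ := hfr
  obtain ⟨u, huI, hu⟩ := hγsurj htfr
  exact ⟨u, huI, t, htI, by rw [hu]; abel⟩

theorem stmt_0
    (D : Set (EuclideanSpace ℝ (Fin 2))) (hDmeas : MeasurableSet D)
    (hDbdd : Bornology.IsBounded D)
    (L : ℝ) (hL : 0 < L)
    (γ : ℝ → EuclideanSpace ℝ (Fin 2))
    (hγcont : ContinuousOn γ (Set.Icc 0 1))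
    (hγclosed : γ 0 = γ 1)
    (hγsurj : frontier D ⊆ γ '' (Set.Icc 0 1))
    (hγlen : eVariationOn γ (Set.Icc 0 1) = ENNReal.ofReal L)
    (s : ℝ) (hs0 : 0 < s) (hs : s ≤ 1 / 2) :
    ∀ x : EuclideanSpace ℝ (Fin 2), x ≠ 0 →
      (eLpNorm (fun y => D.indicator (fun _ => (1 : ℝ)) (y + x)
          - D.indicator (fun _ => (1 : ℝ)) y) 2 volume).toReal / ‖x‖ ^ s
        ≤ Real.sqrt (L * Metric.diam D ^ (1 - 2 * s)) := by
  intro x hx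
  set δ : ℝ := Metric.diam D with hδdef
  have hδ0 : 0 ≤ δ := Metric.diam_nonneg
  have hxn : 0 < ‖x‖ := norm_pos_iff.2 hx
  -- general symdiff volume bound
  have hKbound : ∀ z : E2, z ≠ 0 →
      volume ((D \ ((· + z) ⁻¹' D)) ∪ (((· + z) ⁻¹' D) \ D)) ≤ ENNReal.ofReal (L * ‖z‖) :=
    fun z hz => le_trans (measure_mono (incl D γ hγsurj z))
      (core γ hγcont L hL.le (le_of_eq hγlen) z hz)
  have h1 : volume ((D \ ((· + x) ⁻¹' D)) ∪ (((· + x) ⁻¹' D) \ D))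
      ≤ ENNReal.ofReal (L * ‖x‖) := hKbound x hx
  -- for large x, a better bound
  have h2 : δ < ‖x‖ → volume ((D \ ((· + x) ⁻¹' D)) ∪ (((· + x) ⁻¹' D) \ D))
      ≤ ENNReal.ofReal (L * δ) := by
    intro hgt
    have hsub2 : volume ((D \ ((· + x) ⁻¹' D)) ∪ (((· + x) ⁻¹' D) \ D))
        ≤ volume D + volume D := by
      calc volume ((D \ ((· + x) ⁻¹' D)) ∪ (((· + x) ⁻¹' D) \ D))
          ≤ volume (D \ ((· + x) ⁻¹' D)) + volume (((· + x) ⁻¹' D) \ D) :=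
            measure_union_le _ _
        _ ≤ volume D + volume ((· + x) ⁻¹' D) :=
            add_le_add (measure_mono diff_subset) (measure_mono diff_subset)
        _ = volume D + volume D := by rw [measure_preimage_add_right]
    refine le_trans hsub2 ?_
    apply ENNReal.le_of_forall_pos_le_add
    intro η hη _
    set ε : ℝ := (η:ℝ)/L with hεdef
    have hε : 0 < ε := div_pos hη hL
    set z : E2 := ((δ+ε)/‖x‖) • x with hzdef
    have hzne : z ≠ 0 := smul_ne_zero (by positivity) hx
    have hzn : ‖z‖ = δ + ε := by
      rw [hzdef, norm_smul, Real.norm_eq_abs, abs_of_pos (by positivity),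
        div_mul_cancel₀ _ hxn.ne']
    have hdisj : Disjoint D ((· + z) ⁻¹' D) := by
      rw [Set.disjoint_left]
      intro y hy hy'
      rw [mem_preimage] at hy'
      have hd := Metric.dist_le_diam_of_mem hDbdd hy hy'
      rw [dist_self_add_right] at hd
      rw [hzn] at hd
      linarith
    have hDz : MeasurableSet ((· + z) ⁻¹' D) := hDmeas.preimage (measurable_add_const z)
    have hsub : D ∪ ((· + z) ⁻¹' D)
        ⊆ (D \ ((· + z) ⁻¹' D)) ∪ (((· + z) ⁻¹' D) \ D) := by
      intro y hy
      rcases hy with hy | hy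
      · exact Or.inl ⟨hy, fun h => (Set.disjoint_left.1 hdisj hy) h⟩
      · exact Or.inr ⟨hy, fun h => (Set.disjoint_left.1 hdisj h) hy⟩
    calc volume D + volume D
        = volume D + volume ((· + z) ⁻¹' D) := by rw [measure_preimage_add_right]
      _ = volume (D ∪ ((· + z) ⁻¹' D)) := (measure_union hdisj hDz).symm
      _ ≤ volume ((D \ ((· + z) ⁻¹' D)) ∪ (((· + z) ⁻¹' D) \ D)) := measure_mono hsub
      _ ≤ ENNReal.ofReal (L * ‖z‖) := hKbound z hzne
      _ = ENNReal.ofReal (L * δ + L * ε) := by rw [hzn]; ring_nf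
      _ ≤ ENNReal.ofReal (L * δ) + η := by
          rw [ENNReal.ofReal_add (by positivity) (by positivity)]
          gcongr
          rw [hεdef, mul_div_cancel₀ _ hL.ne']
          simp
  -- real-number manipulations
  rw [elp D hDmeas x]
  set V := volume ((D \ ((· + x) ⁻¹' D)) ∪ (((· + x) ⁻¹' D) \ D)) with hVdef
  set Mv : ℝ := V.toReal with hMdef
  have hM0 : 0 ≤ Mv := ENNReal.toReal_nonneg
  have hM1 : Mv ≤ L * ‖x‖ := ENNReal.toReal_le_of_le_ofReal (by positivity) h1
  have hM2 : δ < ‖x‖ → Mv ≤ L * δ := fun h =>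
    ENNReal.toReal_le_of_le_ofReal (by positivity) (h2 h)
  have hxs : (0:ℝ) < ‖x‖ ^ s := Real.rpow_pos_of_pos hxn s
  have htoReal : (V ^ ((1:ℝ)/2)).toReal = Mv ^ ((1:ℝ)/2) := by
    rw [ENNReal.toReal_rpow]
  rw [htoReal]
  rw [div_le_iff₀ hxs]
  have hkey : Mv ≤ (L * δ ^ (1 - 2*s)) * (‖x‖ ^ s * ‖x‖ ^ s) := by
    have hxss : ‖x‖ ^ s * ‖x‖ ^ s = ‖x‖ ^ (2*s) := by
      rw [← Real.rpow_add hxn]; ring_nf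
    rw [hxss]
    rcases le_or_gt ‖x‖ δ with hle | hlt
    · have hsplit : ‖x‖ ^ (1 - 2*s) * ‖x‖ ^ (2*s) = ‖x‖ := by
        rw [← Real.rpow_add hxn]
        norm_num
      have hmono : ‖x‖ ^ (1 - 2*s) ≤ δ ^ (1 - 2*s) :=
        Real.rpow_le_rpow hxn.le hle (by linarith)
      have hx2s : (0:ℝ) ≤ ‖x‖ ^ (2*s) := (Real.rpow_pos_of_pos hxn _).le
      calc Mv ≤ L * ‖x‖ := hM1
        _ = L * (‖x‖ ^ (1 - 2*s) * ‖x‖ ^ (2*s)) := by rw [hsplit]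
        _ ≤ L * (δ ^ (1 - 2*s) * ‖x‖ ^ (2*s)) := by
            apply mul_le_mul_of_nonneg_left ?_ hL.le
            exact mul_le_mul_of_nonneg_right hmono hx2s
        _ = L * δ ^ (1 - 2*s) * ‖x‖ ^ (2*s) := by ring
    · rcases eq_or_lt_of_le hδ0 with hδz | hδpos
      · have : Mv ≤ 0 := by
          have := hM2 hlt
          rw [← hδz] at this
          simpa using this
        have hrhs : (0:ℝ) ≤ L * δ ^ (1 - 2*s) * ‖x‖ ^ (2*s) := by positivity
        linarith
      · have hsplit : δ ^ (1 - 2*s) * δ ^ (2*s) = δ := by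
          rw [← Real.rpow_add hδpos]
          norm_num
        have hmono : δ ^ (2*s) ≤ ‖x‖ ^ (2*s) :=
          Real.rpow_le_rpow hδ0 hlt.le (by linarith)
        have hd1 : (0:ℝ) ≤ δ ^ (1 - 2*s) := (Real.rpow_pos_of_pos hδpos _).le
        calc Mv ≤ L * δ := hM2 hlt
          _ = L * (δ ^ (1 - 2*s) * δ ^ (2*s)) := by rw [hsplit]
          _ ≤ L * (δ ^ (1 - 2*s) * ‖x‖ ^ (2*s)) := by
              apply mul_le_mul_of_nonneg_left ?_ hL.le
              exact mul_le_mul_of_nonneg_left hmono hd1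
          _ = L * δ ^ (1 - 2*s) * ‖x‖ ^ (2*s) := by ring
  have hMv12 : Mv ^ ((1:ℝ)/2) = Real.sqrt Mv := (Real.sqrt_eq_rpow Mv).symm
  rw [hMv12]
  calc Real.sqrt Mv ≤ Real.sqrt ((L * δ ^ (1 - 2*s)) * (‖x‖ ^ s * ‖x‖ ^ s)) :=
        Real.sqrt_le_sqrt hkey
    _ = Real.sqrt (L * δ ^ (1 - 2*s)) * Real.sqrt (‖x‖ ^ s * ‖x‖ ^ s) := by
        rw [Real.sqrt_mul (by positivity)]
    _ = Real.sqrt (L * δ ^ (1 - 2*s)) * (‖x‖ ^ s) := by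
        rw [Real.sqrt_mul_self hxs.le]
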